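/- The diagonal limit of the smooth kernel part: if h is C¹ at x, then lim_{x₀ → x} G̃(x, x₀) = −(1/(4π))·ln(1 + h'(x)²), where G̃(x,x₀) = −(1/(4π))·ln((sin²((π/(2L))(x−x₀)) + sinh²((π/(2L))(h(x)−h(x₀))))/sin²((π/(2L))(x−x₀))). -/

import Mathlib

open Real Filter Topology

/-- Diagonal limit of the smooth part of the single-layer kernel:
`lim_{x₀ → x} G̃(x, x₀) = -(1/(4π)) ln(1 + h'(x)²)`. -/
theorem stmt_13 (L : ℝ) (hL : 0 < L) (h : ℝ → ℝ) (x h' : ℝ)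
    (hd : HasDerivAt h h' x)
    (Gt : ℝ → ℝ → ℝ)
    (hGt : ∀ x' x₀ : ℝ, Gt x' x₀ =
      -(1 / (4 * π)) * Real.log
        ((Real.sin ((π / (2 * L)) * (x' - x₀)) ^ 2
            + Real.sinh ((π / (2 * L)) * (h x' - h x₀)) ^ 2)
          / Real.sin ((π / (2 * L)) * (x' - x₀)) ^ 2)) :
    Tendsto (fun x₀ => Gt x x₀) (nhdsWithin x {x}ᶜ)
      (nhds (-(1 / (4 * π)) * Real.log (1 + h' ^ 2))) := by
  set c : ℝ := π / (2 * L) with hc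
  have hπ := Real.pi_pos
  have hcpos : 0 < c := div_pos hπ (by linarith)
  -- the ratio function
  set r : ℝ → ℝ := fun x₀ => Real.sinh (c * (h x - h x₀)) / Real.sin (c * (x - x₀)) with hr
  -- f and g
  set f : ℝ → ℝ := fun y => Real.sinh (c * (h x - h y)) with hf
  set g : ℝ → ℝ := fun y => Real.sin (c * (x - y)) with hg
  have hf0 : f x = 0 := by simp [hf]
  have hg0 : g x = 0 := by simp [hg]
  have hdf : HasDerivAt f (-(c * h')) x := by
    have h1 : HasDerivAt (fun y => c * (h x - h y)) (c * (0 - h')) x :=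
      (((hasDerivAt_const x (h x)).sub hd)).const_mul c
    have := (Real.hasDerivAt_sinh (c * (h x - h x))).comp x h1
    simp at this; exact this
  have hdg : HasDerivAt g (-c) x := by
    have h1 : HasDerivAt (fun y => c * (x - y)) (c * (0 - 1)) x :=
      (((hasDerivAt_const x x).sub (hasDerivAt_id x))).const_mul c
    have := (Real.hasDerivAt_sin (c * (x - x))).comp x h1
    simp at this; exact this
  have hsf : Tendsto (slope f x) (𝓝[≠] x) (𝓝 (-(c * h'))) :=
    hasDerivAt_iff_tendsto_slope.mp hdf
  have hsg : Tendsto (slope g x) (𝓝[≠] x) (𝓝 (-c)) :=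
    hasDerivAt_iff_tendsto_slope.mp hdg
  have hrt : Tendsto r (𝓝[≠] x) (𝓝 h') := by
    have hdiv : Tendsto (fun y => slope f x y / slope g x y) (𝓝[≠] x)
        (𝓝 (-(c * h') / -c)) := hsf.div hsg (neg_ne_zero.mpr (ne_of_gt hcpos))
    have heq : ∀ᶠ y in 𝓝[≠] x, slope f x y / slope g x y = r y := by
      filter_upwards [self_mem_nhdsWithin] with y hy
      have hyx : y - x ≠ 0 := sub_ne_zero.mpr hy
      simp only [slope_def_field, hf0, hg0, hf, hg, hr]
      field_simp
      simp
    have : Tendsto r (𝓝[≠] x) (𝓝 (-(c * h') / -c)) := hdiv.congr' heq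
    convert this using 2
    field_simp
  -- eventually sin ≠ 0
  have hsin : ∀ᶠ x₀ in 𝓝[≠] x, Real.sin (c * (x - x₀)) ≠ 0 := by
    have hball : ∀ᶠ x₀ in 𝓝[≠] x, |x₀ - x| < 2 * L := by
      apply nhdsWithin_le_nhds
      have : Metric.ball x (2 * L) ∈ 𝓝 x := Metric.ball_mem_nhds x (by linarith)
      filter_upwards [this] with y hy
      simpa [Real.dist_eq] using hy
    filter_upwards [hball, self_mem_nhdsWithin] with x₀ hb hne hs
    rw [Real.sin_eq_zero_iff] at hs
    obtain ⟨n, hn⟩ := hs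
    have hxne : x - x₀ ≠ 0 := sub_ne_zero.mpr (Ne.symm hne)
    have habs : |c * (x - x₀)| < π := by
      rw [abs_mul, abs_of_pos hcpos, abs_sub_comm]
      calc c * |x₀ - x| < c * (2 * L) := by
            exact mul_lt_mul_of_pos_left hb hcpos
        _ = π := by rw [hc]; field_simp [hL.ne']
    have hn0 : n = 0 := by
      by_contra hn0
      have : (1 : ℝ) ≤ |(n : ℝ)| := by
        exact_mod_cast Int.one_le_abs (by exact_mod_cast hn0)
      have : π ≤ |(n : ℝ) * π| := by
        rw [abs_mul, abs_of_pos hπ]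
        nlinarith
      rw [hn] at this
      linarith
    rw [hn0] at hn
    simp at hn
    rcases hn with hn | hn
    · exact absurd hn (ne_of_gt hcpos)
    · exact hxne hn
  -- rewrite Gt eventually
  have hGeq : ∀ᶠ x₀ in 𝓝[≠] x, Gt x x₀ = -(1 / (4 * π)) * Real.log (1 + r x₀ ^ 2) := by
    filter_upwards [hsin] with x₀ hs
    rw [hGt]
    congr 1
    have hs2 : Real.sin (c * (x - x₀)) ^ 2 ≠ 0 := pow_ne_zero 2 hs
    rw [hr]
    field_simp
  -- conclude by continuity
  have hlog : Tendsto (fun x₀ => -(1 / (4 * π)) * Real.log (1 + r x₀ ^ 2)) (𝓝[≠] x)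
      (𝓝 (-(1 / (4 * π)) * Real.log (1 + h' ^ 2))) := by
    have h1 : Tendsto (fun x₀ => 1 + r x₀ ^ 2) (𝓝[≠] x) (𝓝 (1 + h' ^ 2)) :=
      tendsto_const_nhds.add ((hrt.pow 2))
    have h2 : ContinuousAt Real.log (1 + h' ^ 2) :=
      Real.continuousAt_log (by positivity)
    exact (h2.tendsto.comp h1).const_mul _
  exact hlog.congr' (hGeq.mono fun _ e => e.symm)
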